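/- arXiv:2102.06436 — 6 statements merged into one kernel-verified Lean document; each statement's English description precedes it below -/
import Mathlib

section
/- Let n ≥ 1, let π_I : ℝⁿ → ℝ be the projection onto a distinguished coordinate, let f₀, g : ℝⁿ → ℝⁿ satisfy π_I(f₀(x)) = π_I(x) for all x ∈ ℝⁿ, let ε > 0 and set f_ε := f₀ + ε·g. Assume f_ε is a bijection, and that there is L_g > 0 with |π_I(g(x₁)) − π_I(g(x₂))| ≤ L_g‖x₁ − x₂‖ for all x₁, x₂ ∈ ℝⁿ. Let C > 0, λ ∈ (0,1), m ≥ 1, and let z, x, w ∈ ℝⁿ satisfy: ‖f_ε^{−j}(z) − f_ε^{−j}(x)‖ < C·λ^{j} for all integers j ≥ 0, and ‖f_ε^{m+j}(w) − f_ε^{m+j}(x)‖ < C·λ^{j} for all integers j ≥ 0. Then π_I(f_ε^{m}(w) − z) ≥ ε·( Σ_{j=0}^{m−1} π_I(g(f_ε^{j}(x))) − ((1+λ)/(1−λ))·C·L_g ). -/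
open Finset Filter

lemma coord_le_norm {n : ℕ} (y : EuclideanSpace ℝ (Fin n)) (i : Fin n) :
    |y i| ≤ ‖y‖ := by
  rw [EuclideanSpace.norm_eq]
  have h1 : |y i| = Real.sqrt (‖y i‖ ^ 2) := by
    rw [Real.sqrt_sq_eq_abs]; simp [abs_abs, Real.norm_eq_abs]
  rw [h1]
  apply Real.sqrt_le_sqrt
  exact Finset.single_le_sum (f := fun j => ‖y j‖ ^ 2)
    (fun j _ => by positivity) (Finset.mem_univ i)

lemma geom_sum_le_aux {lam : ℝ} (hlam : 0 < lam) (hlam1 : lam < 1) (N : ℕ) :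
    ∑ k ∈ Finset.range N, lam ^ k ≤ 1 / (1 - lam) := by
  have h1 : 0 < 1 - lam := by linarith
  have heq : ∑ k ∈ Finset.range N, lam ^ k = (1 - lam ^ N) / (1 - lam) := by
    rw [geom_sum_eq (ne_of_lt hlam1) N, ← neg_div_neg_eq]
    ring_nf
  rw [heq, div_le_div_iff₀ h1 h1]
  have hpow : 0 ≤ lam ^ N := by positivity
  nlinarith

/-- Key quantitative step: lower bound for the gain in the action coordinate `I`
along a finite fragment of a homoclinic excursion. -/
theorem stmt_0 (n : ℕ) (hn : 1 ≤ n) (iI : Fin n)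
    (f₀ g : EuclideanSpace ℝ (Fin n) → EuclideanSpace ℝ (Fin n))
    (hf₀ : ∀ x, f₀ x iI = x iI)
    (ε : ℝ) (hε : 0 < ε)
    (fε : EuclideanSpace ℝ (Fin n) → EuclideanSpace ℝ (Fin n))
    (hfε : ∀ x, fε x = f₀ x + ε • g x)
    (hbij : Function.Bijective fε)
    (Lg : ℝ) (hLg : 0 < Lg)
    (hLip : ∀ x₁ x₂, |g x₁ iI - g x₂ iI| ≤ Lg * ‖x₁ - x₂‖)
    (C lam : ℝ) (hC : 0 < C) (hlam : 0 < lam) (hlam1 : lam < 1)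
    (m : ℕ) (hm : 1 ≤ m)
    (z x w : EuclideanSpace ℝ (Fin n))
    (hz : ∀ j : ℕ, ‖(Function.invFun fε)^[j] z - (Function.invFun fε)^[j] x‖ < C * lam ^ j)
    (hw : ∀ j : ℕ, ‖fε^[m + j] w - fε^[m + j] x‖ < C * lam ^ j) :
    ε * ((∑ j ∈ Finset.range m, g (fε^[j] x) iI) - (1 + lam) / (1 - lam) * C * Lg)
      ≤ (fε^[m] w - z) iI := by
  set F := Function.invFun fε with hF
  have hRI : ∀ y, fε (F y) = y := fun y =>
    Function.rightInverse_invFun hbij.2 y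
  -- one step in the I coordinate
  have hstep : ∀ y, fε y iI = y iI + ε * g y iI := by
    intro y
    rw [hfε y]
    simp [PiLp.add_apply, PiLp.smul_apply, hf₀, smul_eq_mul]
  -- forward iterates
  have hAfwd : ∀ (y : EuclideanSpace ℝ (Fin n)) (k : ℕ),
      (fε^[k] y) iI = y iI + ε * ∑ j ∈ Finset.range k, g (fε^[j] y) iI := by
    intro y k
    induction k with
    | zero => simp
    | succ k ih =>
      rw [Function.iterate_succ_apply', hstep, ih, Finset.sum_range_succ]
      ring
  -- backward iterates
  have hAbwd : ∀ (y : EuclideanSpace ℝ (Fin n)) (k : ℕ),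
      y iI = (F^[k] y) iI + ε * ∑ j ∈ Finset.range k, g (F^[j+1] y) iI := by
    intro y k
    induction k with
    | zero => simp
    | succ k ih =>
      have h1 : (F^[k] y) iI = (F^[k+1] y) iI + ε * g (F^[k+1] y) iI := by
        have := hstep (F^[k+1] y)
        rw [Function.iterate_succ_apply', hRI] at this
        rw [← Function.iterate_succ_apply' F k y] at this
        linarith
      rw [ih, h1, Finset.sum_range_succ]
      ring
  set S := ∑ j ∈ Finset.range m, g (fε^[j] x) iI with hS
  have hgeo := geom_sum_le_aux hlam hlam1
  have hkey : ∀ N : ℕ,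
      ε * (S - (1 + lam) / (1 - lam) * C * Lg)
        ≤ (fε^[m] w - z) iI + 2 * C * lam ^ N := by
    intro N
    have h1m : 0 < 1 - lam := by linarith
    -- Part 1: fε^[m] w iI - fε^[m] x iI ≥ -C λ^N - ε Lg C / (1-λ)
    have hpart1 : -(C * lam ^ N) - ε * (Lg * C * (1 / (1 - lam)))
        ≤ (fε^[m] w) iI - (fε^[m] x) iI := by
      have hw' : ∀ (y : EuclideanSpace ℝ (Fin n)),
          (fε^[m + N] y) iI = (fε^[m] y) iI
            + ε * ∑ k ∈ Finset.range N, g (fε^[m + k] y) iI := by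
        intro y
        have := hAfwd (fε^[m] y) N
        have heq : ∀ k : ℕ, fε^[k] (fε^[m] y) = fε^[m + k] y := by
          intro k
          rw [add_comm, Function.iterate_add_apply]
        have hsum : ∑ j ∈ Finset.range N, g (fε^[j] (fε^[m] y)) iI
            = ∑ k ∈ Finset.range N, g (fε^[m + k] y) iI :=
          Finset.sum_congr rfl fun k _ => by rw [heq k]
        rw [heq N, hsum] at this
        exact this
      have hdiff : (fε^[m] w) iI - (fε^[m] x) iI
          = ((fε^[m+N] w) iI - (fε^[m+N] x) iI)
            - ε * ∑ k ∈ Finset.range N, (g (fε^[m+k] w) iI - g (fε^[m+k] x) iI) := by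
        rw [hw' w, hw' x, Finset.sum_sub_distrib]
        ring
      have hb1 : |(fε^[m+N] w) iI - (fε^[m+N] x) iI| ≤ C * lam ^ N := by
        calc |(fε^[m+N] w) iI - (fε^[m+N] x) iI|
            = |(fε^[m+N] w - fε^[m+N] x) iI| := by rw [PiLp.sub_apply]
          _ ≤ ‖fε^[m+N] w - fε^[m+N] x‖ := coord_le_norm _ _
          _ ≤ C * lam ^ N := (hw N).le
      have hb2 : |∑ k ∈ Finset.range N, (g (fε^[m+k] w) iI - g (fε^[m+k] x) iI)|
          ≤ Lg * C * (1 / (1 - lam)) := by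
        calc |∑ k ∈ Finset.range N, (g (fε^[m+k] w) iI - g (fε^[m+k] x) iI)|
            ≤ ∑ k ∈ Finset.range N, |g (fε^[m+k] w) iI - g (fε^[m+k] x) iI| :=
              Finset.abs_sum_le_sum_abs _ _
          _ ≤ ∑ k ∈ Finset.range N, Lg * C * lam ^ k := by
              apply Finset.sum_le_sum
              intro k _
              calc |g (fε^[m+k] w) iI - g (fε^[m+k] x) iI|
                  ≤ Lg * ‖fε^[m+k] w - fε^[m+k] x‖ := hLip _ _
                _ ≤ Lg * (C * lam ^ k) := by
                    exact mul_le_mul_of_nonneg_left (hw k).le hLg.le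
                _ = Lg * C * lam ^ k := by ring
          _ = Lg * C * ∑ k ∈ Finset.range N, lam ^ k := by
              rw [Finset.mul_sum]
          _ ≤ Lg * C * (1 / (1 - lam)) := by
              apply mul_le_mul_of_nonneg_left (hgeo N) (by positivity)
      rw [hdiff]
      have h1 := neg_le_of_abs_le hb1
      have h2 := le_of_abs_le hb2
      nlinarith
    -- Part 2: x iI - z iI ≥ -C λ^N - ε Lg C λ/(1-λ)
    have hpart2 : -(C * lam ^ N) - ε * (Lg * C * (lam / (1 - lam)))
        ≤ x iI - z iI := by
      have hdiff : x iI - z iI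
          = ((F^[N] x) iI - (F^[N] z) iI)
            + ε * ∑ j ∈ Finset.range N, (g (F^[j+1] x) iI - g (F^[j+1] z) iI) := by
        rw [hAbwd x N, hAbwd z N, Finset.sum_sub_distrib]
        ring
      have hb1 : |(F^[N] x) iI - (F^[N] z) iI| ≤ C * lam ^ N := by
        calc |(F^[N] x) iI - (F^[N] z) iI|
            = |(F^[N] z - F^[N] x) iI| := by rw [PiLp.sub_apply, abs_sub_comm]
          _ ≤ ‖F^[N] z - F^[N] x‖ := coord_le_norm _ _
          _ ≤ C * lam ^ N := (hz N).le
      have hb2 : |∑ j ∈ Finset.range N, (g (F^[j+1] x) iI - g (F^[j+1] z) iI)|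
          ≤ Lg * C * (lam / (1 - lam)) := by
        calc |∑ j ∈ Finset.range N, (g (F^[j+1] x) iI - g (F^[j+1] z) iI)|
            ≤ ∑ j ∈ Finset.range N, |g (F^[j+1] x) iI - g (F^[j+1] z) iI| :=
              Finset.abs_sum_le_sum_abs _ _
          _ ≤ ∑ j ∈ Finset.range N, Lg * C * lam ^ (j+1) := by
              apply Finset.sum_le_sum
              intro j _
              calc |g (F^[j+1] x) iI - g (F^[j+1] z) iI|
                  ≤ Lg * ‖F^[j+1] x - F^[j+1] z‖ := hLip _ _
                _ = Lg * ‖F^[j+1] z - F^[j+1] x‖ := by rw [norm_sub_rev]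
                _ ≤ Lg * (C * lam ^ (j+1)) := by
                    exact mul_le_mul_of_nonneg_left (hz (j+1)).le hLg.le
                _ = Lg * C * lam ^ (j+1) := by ring
          _ = Lg * C * lam * ∑ j ∈ Finset.range N, lam ^ j := by
              rw [Finset.mul_sum]
              apply Finset.sum_congr rfl
              intro j _
              rw [pow_succ]
              ring
          _ ≤ Lg * C * lam * (1 / (1 - lam)) := by
              apply mul_le_mul_of_nonneg_left (hgeo N) (by positivity)
          _ = Lg * C * (lam / (1 - lam)) := by ring
      rw [hdiff]
      have h1 := neg_le_of_abs_le hb1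
      have h2 := neg_le_of_abs_le hb2
      nlinarith
    -- Part 3: main term
    have hpart3 : (fε^[m] x) iI - x iI = ε * S := by
      rw [hAfwd x m]; ring
    have hsplit : (fε^[m] w - z) iI
        = ((fε^[m] w) iI - (fε^[m] x) iI) + ((fε^[m] x) iI - x iI) + (x iI - z iI) := by
      rw [PiLp.sub_apply]; ring
    have herr : (1 + lam) / (1 - lam) = 1 / (1 - lam) + lam / (1 - lam) := by
      field_simp
    rw [hsplit, hpart3, herr]
    nlinarith
  -- take the limit N → ∞
  have htend : Tendsto (fun N : ℕ => (fε^[m] w - z) iI + 2 * C * lam ^ N)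
      atTop (nhds ((fε^[m] w - z) iI)) := by
    have h0 : Tendsto (fun N : ℕ => lam ^ N) atTop (nhds 0) :=
      tendsto_pow_atTop_nhds_zero_of_lt_one hlam.le hlam1
    have := (h0.const_mul (2 * C)).const_add ((fε^[m] w - z) iI)
    simpa using this
  exact ge_of_tendsto htend (Filter.Eventually.of_forall hkey)
end

section
/- Let n ≥ 1, let π_I : ℝⁿ → ℝ be the projection onto a distinguished coordinate, let f₀, g : ℝⁿ → ℝⁿ satisfy π_I(f₀(x)) = π_I(x) for all x ∈ ℝⁿ, let ε ≥ 0 and set f_ε := f₀ + ε·g. Assume there is L_g > 0 with |π_I(g(x₁)) − π_I(g(x₂))| ≤ L_g‖x₁ − x₂‖ for all x₁, x₂ ∈ ℝⁿ. Let C > 0, λ ∈ (0,1), m ≥ 0, and let w, x ∈ ℝⁿ satisfy ‖f_ε^{m+j}(w) − f_ε^{m+j}(x)‖ < C·λ^{j} for all integers j ≥ 0. Then |π_I(f_ε^{m}(w) − f_ε^{m}(x))| ≤ ε·L_g·C/(1−λ). -/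
lemma abs_coord_le_norm {n : ℕ} (v : EuclideanSpace ℝ (Fin n)) (i : Fin n) :
    |v i| ≤ ‖v‖ := by
  rw [EuclideanSpace.norm_eq]
  have h1 : |v i| = Real.sqrt (‖v i‖ ^ 2) := by
    rw [Real.sqrt_sq_eq_abs]; simp [abs_abs]
  rw [h1]
  apply Real.sqrt_le_sqrt
  exact Finset.single_le_sum (f := fun j => ‖v j‖ ^ 2)
    (fun j _ => sq_nonneg _) (Finset.mem_univ i)

/-- Bound on the difference of the action coordinate `I` between a point and the point
on a stable fiber that it shadows forward in time. -/
theorem stmt_3 (n : ℕ) (hn : 1 ≤ n) (iI : Fin n)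
    (f₀ g : EuclideanSpace ℝ (Fin n) → EuclideanSpace ℝ (Fin n))
    (hf₀ : ∀ x, f₀ x iI = x iI)
    (ε : ℝ) (hε : 0 ≤ ε)
    (fε : EuclideanSpace ℝ (Fin n) → EuclideanSpace ℝ (Fin n))
    (hfε : ∀ x, fε x = f₀ x + ε • g x)
    (Lg : ℝ) (hLg : 0 < Lg)
    (hLip : ∀ x₁ x₂, |g x₁ iI - g x₂ iI| ≤ Lg * ‖x₁ - x₂‖)
    (C lam : ℝ) (hC : 0 < C) (hlam : 0 < lam) (hlam1 : lam < 1)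
    (m : ℕ)
    (w x : EuclideanSpace ℝ (Fin n))
    (hw : ∀ j : ℕ, ‖fε^[m + j] w - fε^[m + j] x‖ < C * lam ^ j) :
    |(fε^[m] w - fε^[m] x) iI| ≤ ε * Lg * C / (1 - lam) := by
  have h1lam : (0:ℝ) < 1 - lam := by linarith
  -- the coordinate difference sequence
  set D : ℕ → ℝ := fun j => (fε^[m + j] w - fε^[m + j] x) iI with hD
  have hDj : ∀ j, D j = fε^[m + j] w iI - fε^[m + j] x iI := fun j => rfl
  -- step relation
  have hstep : ∀ j, D (j + 1) - D j
      = ε * (g (fε^[m + j] w) iI - g (fε^[m + j] x) iI) := by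
    intro j
    have hiter : ∀ y : EuclideanSpace ℝ (Fin n),
        fε^[m + (j + 1)] y = fε (fε^[m + j] y) := by
      intro y
      rw [show m + (j + 1) = (m + j) + 1 by ring, Function.iterate_succ_apply']
    have hcoord : ∀ y : EuclideanSpace ℝ (Fin n),
        fε y iI = y iI + ε * g y iI := by
      intro y
      rw [hfε]
      have : (f₀ y + ε • g y) iI = f₀ y iI + ε * g y iI := rfl
      rw [this, hf₀]
    rw [hDj, hDj, hiter w, hiter x, hcoord, hcoord]
    ring
  -- bound on each step
  have hstepbd : ∀ j, |D (j + 1) - D j| ≤ ε * Lg * C * lam ^ j := by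
    intro j
    rw [hstep]
    rw [abs_mul, abs_of_nonneg hε]
    calc ε * |g (fε^[m + j] w) iI - g (fε^[m + j] x) iI|
        ≤ ε * (Lg * ‖fε^[m + j] w - fε^[m + j] x‖) := by
          exact mul_le_mul_of_nonneg_left (hLip _ _) hε
      _ ≤ ε * (Lg * (C * lam ^ j)) := by
          apply mul_le_mul_of_nonneg_left _ hε
          exact mul_le_mul_of_nonneg_left (hw j).le hLg.le
      _ = ε * Lg * C * lam ^ j := by ring
  -- telescoping bound
  have htel : ∀ N, |D N - D 0| ≤ ε * Lg * C / (1 - lam) := by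
    intro N
    have : D N - D 0 = ∑ j ∈ Finset.range N, (D (j + 1) - D j) :=
      (Finset.sum_range_sub D N).symm
    rw [this]
    calc |∑ j ∈ Finset.range N, (D (j + 1) - D j)|
        ≤ ∑ j ∈ Finset.range N, |D (j + 1) - D j| := Finset.abs_sum_le_sum_abs _ _
      _ ≤ ∑ j ∈ Finset.range N, ε * Lg * C * lam ^ j :=
          Finset.sum_le_sum (fun j _ => hstepbd j)
      _ = ε * Lg * C * ∑ j ∈ Finset.range N, lam ^ j := by
          rw [Finset.mul_sum]
      _ ≤ ε * Lg * C * (1 / (1 - lam)) := by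
          apply mul_le_mul_of_nonneg_left _ (by positivity)
          rw [geom_sum_eq (by linarith : lam ≠ 1)]
          have heq : (lam ^ N - 1) / (lam - 1) = (1 - lam ^ N) / (1 - lam) := by
            rw [div_eq_div_iff (by linarith) h1lam.ne']
            ring
          rw [heq, div_le_div_iff₀ h1lam h1lam]
          have : lam ^ N ≥ 0 := by positivity
          nlinarith
      _ = ε * Lg * C / (1 - lam) := by ring
  -- so |D 0| ≤ |D N| + bound ≤ C λ^N + bound for all N
  have hbd : ∀ N, |D 0| ≤ C * lam ^ N + ε * Lg * C / (1 - lam) := by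
    intro N
    have h1 : |D 0| ≤ |D N| + |D N - D 0| := by
      have := abs_sub_abs_le_abs_sub (D 0) (D N)
      have h := abs_sub (D 0) (D N)
      calc |D 0| = |D N + (D 0 - D N)| := by ring_nf
        _ ≤ |D N| + |D 0 - D N| := abs_add_le _ _
        _ = |D N| + |D N - D 0| := by rw [abs_sub_comm]
    have h2 : |D N| ≤ C * lam ^ N :=
      (abs_coord_le_norm _ iI).trans (hw N).le
    linarith [htel N]
  -- take the limit N → ∞
  have hlim : Filter.Tendsto (fun N : ℕ => C * lam ^ N + ε * Lg * C / (1 - lam))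
      Filter.atTop (nhds (0 + ε * Lg * C / (1 - lam))) := by
    apply Filter.Tendsto.add _ tendsto_const_nhds
    simpa using (tendsto_pow_atTop_nhds_zero_of_lt_one hlam.le hlam1).const_mul C
  have := ge_of_tendsto' hlim hbd
  simpa [hD] using this
end

section
/- Let 𝓛 > 0, r > 0, B = [−r, r] × [−𝓛r, 𝓛r] ⊂ ℝ², and for z ∈ ℝ² let C⁺(z) = { v ∈ ℝ² : 𝓛·|z₁ − v₁| ≥ |z₂ − v₂| }. Let F̃ : ℝ² → ℝ² be continuously differentiable. Suppose that every 2×2 real matrix A = (a_{ij}) whose entries satisfy inf_{x∈B} ∂F̃_i/∂x_j (x) ≤ a_{ij} ≤ sup_{x∈B} ∂F̃_i/∂x_j (x) for all i, j maps C⁺(0) into C⁺(0). Then F̃ satisfies cone conditions in B: for every z ∈ B, F̃(C⁺(z) ∩ B) ⊆ C⁺(F̃(z)). -/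
/-- Mean value theorem for a scalar linear functional of `F` along a segment. -/
lemma mvt_comp (F : ℝ × ℝ → ℝ × ℝ) (hF : ContDiff ℝ 1 F) (φ : (ℝ × ℝ) →L[ℝ] ℝ)
    (v z : ℝ × ℝ) :
    ∃ t ∈ Set.Ioo (0:ℝ) 1,
      φ (F z) - φ (F v) = φ (fderiv ℝ F (v + t • (z - v)) (z - v)) := by
  set γ : ℝ → ℝ × ℝ := fun t => v + t • (z - v) with hγdef
  have hγ : ∀ t : ℝ, HasDerivAt γ (z - v) t := by
    intro t
    have := ((hasDerivAt_id t).smul_const (z - v)).const_add v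
    simpa [hγdef] using this
  set g : ℝ → ℝ := fun t => φ (F (γ t)) with hgdef
  have hg : ∀ t : ℝ, HasDerivAt g (φ (fderiv ℝ F (γ t) (z - v))) t := by
    intro t
    have hFd : HasFDerivAt F (fderiv ℝ F (γ t)) (γ t) :=
      ((hF.differentiable one_ne_zero) (γ t)).hasFDerivAt
    have := (φ.hasFDerivAt.comp (γ t) hFd).comp_hasDerivAt t (hγ t)
    exact this
  have hcont : ContinuousOn g (Set.Icc (0:ℝ) 1) :=
    (Continuous.continuousOn (by
      apply φ.continuous.comp
      apply hF.continuous.comp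
      exact continuous_const.add (continuous_id.smul continuous_const)))
  obtain ⟨c, hc, hceq⟩ := exists_hasDerivAt_eq_slope g
    (fun t => φ (fderiv ℝ F (γ t) (z - v))) zero_lt_one hcont (fun x _ => hg x)
  refine ⟨c, hc, ?_⟩
  have h1 : γ 1 = z := by simp [hγdef]
  have h0 : γ 0 = v := by simp [hγdef]
  show φ (F z) - φ (F v) = φ (fderiv ℝ F (γ c) (z - v))
  rw [hceq]
  simp [hgdef, h0, h1]

/-- If every matrix in the interval enclosure of the Jacobian of `F` over `B` maps the
cone `C⁺(0)` into itself, then `F` satisfies cone conditions in `B`. -/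
theorem stmt_7 (L r : ℝ) (hL : 0 < L) (hr : 0 < r)
    (F : ℝ × ℝ → ℝ × ℝ) (hF : ContDiff ℝ 1 F)
    (B : Set (ℝ × ℝ)) (hB : B = Set.Icc (-r) r ×ˢ Set.Icc (-(L * r)) (L * r))
    (Cone : ℝ × ℝ → Set (ℝ × ℝ))
    (hCone : ∀ z, Cone z = {v | |z.2 - v.2| ≤ L * |z.1 - v.1|})
    (pd : Fin 2 → Fin 2 → ℝ × ℝ → ℝ)
    (hpd : ∀ x : ℝ × ℝ,
      pd 0 0 x = (fderiv ℝ F x (1, 0)).1 ∧ pd 0 1 x = (fderiv ℝ F x (0, 1)).1 ∧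
      pd 1 0 x = (fderiv ℝ F x (1, 0)).2 ∧ pd 1 1 x = (fderiv ℝ F x (0, 1)).2)
    (hA : ∀ A : Matrix (Fin 2) (Fin 2) ℝ,
      (∀ i j, sInf (pd i j '' B) ≤ A i j ∧ A i j ≤ sSup (pd i j '' B)) →
      ∀ v : ℝ × ℝ, v ∈ Cone 0 →
        (A 0 0 * v.1 + A 0 1 * v.2, A 1 0 * v.1 + A 1 1 * v.2) ∈ Cone 0) :
    ∀ z ∈ B, F '' (Cone z ∩ B) ⊆ Cone (F z) := by
  have hpd00 : pd 0 0 = fun x => (fderiv ℝ F x (1, 0)).1 := funext fun x => (hpd x).1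
  have hpd01 : pd 0 1 = fun x => (fderiv ℝ F x (0, 1)).1 := funext fun x => (hpd x).2.1
  have hpd10 : pd 1 0 = fun x => (fderiv ℝ F x (1, 0)).2 := funext fun x => (hpd x).2.2.1
  have hpd11 : pd 1 1 = fun x => (fderiv ℝ F x (0, 1)).2 := funext fun x => (hpd x).2.2.2
  have hdF : Continuous (fderiv ℝ F) := hF.continuous_fderiv one_ne_zero
  have hcont : ∀ i j, Continuous (pd i j) := by
    intro i j
    have c00 : Continuous (pd 0 0) := hpd00 ▸ (hdF.clm_apply continuous_const).fst
    have c01 : Continuous (pd 0 1) := hpd01 ▸ (hdF.clm_apply continuous_const).fst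
    have c10 : Continuous (pd 1 0) := hpd10 ▸ (hdF.clm_apply continuous_const).snd
    have c11 : Continuous (pd 1 1) := hpd11 ▸ (hdF.clm_apply continuous_const).snd
    fin_cases i <;> fin_cases j
    · exact c00
    · exact c01
    · exact c10
    · exact c11
  have hK : IsCompact B := by rw [hB]; exact isCompact_Icc.prod isCompact_Icc
  have hconv : Convex ℝ B := by rw [hB]; exact (convex_Icc _ _).prod (convex_Icc _ _)
  have hencl : ∀ (i j : Fin 2) (x : ℝ × ℝ), x ∈ B →
      sInf (pd i j '' B) ≤ pd i j x ∧ pd i j x ≤ sSup (pd i j '' B) := by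
    intro i j x hx
    have himg : IsCompact (pd i j '' B) := hK.image (hcont i j)
    exact ⟨csInf_le himg.bddBelow ⟨x, hx, rfl⟩, le_csSup himg.bddAbove ⟨x, hx, rfl⟩⟩
  rintro z hz _ ⟨v, ⟨hvC, hvB⟩, rfl⟩
  -- segment points lie in B
  have hseg : ∀ t ∈ Set.Ioo (0:ℝ) 1, v + t • (z - v) ∈ B := by
    intro t ht
    have : v + t • (z - v) = (1 - t) • v + t • z := by module
    rw [this]
    exact hconv hvB hz (by linarith [ht.2]) (le_of_lt ht.1) (by ring)
  -- the decomposition of fderiv applied to z - v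
  have hlin : ∀ ξ : ℝ × ℝ,
      fderiv ℝ F ξ (z - v) =
        (z - v).1 • fderiv ℝ F ξ (1, 0) + (z - v).2 • fderiv ℝ F ξ (0, 1) := by
    intro ξ
    have hu : z - v = (z - v).1 • ((1:ℝ), (0:ℝ)) + (z - v).2 • ((0:ℝ), (1:ℝ)) := by
      simp [Prod.ext_iff]
    conv_lhs => rw [hu]
    rw [map_add, map_smul, map_smul]
  obtain ⟨t₀, ht₀, heq₀⟩ := mvt_comp F hF (ContinuousLinearMap.fst ℝ ℝ ℝ) v z
  obtain ⟨t₁, ht₁, heq₁⟩ := mvt_comp F hF (ContinuousLinearMap.snd ℝ ℝ ℝ) v z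
  set ξ₀ := v + t₀ • (z - v) with hξ₀
  set ξ₁ := v + t₁ • (z - v) with hξ₁
  have hξ₀B : ξ₀ ∈ B := hseg t₀ ht₀
  have hξ₁B : ξ₁ ∈ B := hseg t₁ ht₁
  have e0 : (F z).1 - (F v).1 = pd 0 0 ξ₀ * (z - v).1 + pd 0 1 ξ₀ * (z - v).2 := by
    have := heq₀
    rw [hlin ξ₀] at this
    simpa [hpd00, hpd01, mul_comm] using this
  have e1 : (F z).2 - (F v).2 = pd 1 0 ξ₁ * (z - v).1 + pd 1 1 ξ₁ * (z - v).2 := by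
    have := heq₁
    rw [hlin ξ₁] at this
    simpa [hpd10, hpd11, mul_comm] using this
  set A : Matrix (Fin 2) (Fin 2) ℝ :=
    Matrix.of ![![pd 0 0 ξ₀, pd 0 1 ξ₀], ![pd 1 0 ξ₁, pd 1 1 ξ₁]] with hAdef
  have hAencl : ∀ i j, sInf (pd i j '' B) ≤ A i j ∧ A i j ≤ sSup (pd i j '' B) := by
    intro i j
    fin_cases i <;> fin_cases j
    · exact hencl 0 0 ξ₀ hξ₀B
    · exact hencl 0 1 ξ₀ hξ₀B
    · exact hencl 1 0 ξ₁ hξ₁B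
    · exact hencl 1 1 ξ₁ hξ₁B
  have hmemC : z - v ∈ Cone 0 := by
    rw [hCone] at hvC ⊢
    simp only [Set.mem_setOf_eq] at hvC ⊢
    simpa [Prod.fst_sub, Prod.snd_sub, abs_sub_comm] using hvC
  have key := hA A hAencl (z - v) hmemC
  rw [hCone, Set.mem_setOf_eq] at key
  rw [hCone, Set.mem_setOf_eq]
  have hA00 : A 0 0 = pd 0 0 ξ₀ := rfl
  have hA01 : A 0 1 = pd 0 1 ξ₀ := rfl
  have hA10 : A 1 0 = pd 1 0 ξ₁ := rfl
  have hA11 : A 1 1 = pd 1 1 ξ₁ := rfl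
  rw [hA00, hA01, hA10, hA11] at key
  simp only [Prod.fst_zero, Prod.snd_zero, zero_sub, abs_neg] at key
  rw [← e0, ← e1] at key
  exact key
end

section
/- Let α ∈ ℝ and let f : ℂ² → ℂ² be the complex Chirikov standard map f(z₁, z₂) = (z₁ + z₂ + α·sin(z₁), z₂ + α·sin(z₁)). Fix z₀ ∈ ℝ² ⊂ ℂ² and constants 0 < r* < R with r* ≤ 1. Define the first-order Taylor remainder 𝓡_z(w) := f(z + w) − f(z) − Df(z)w. Then for all z ∈ ℂ² with ‖z − z₀‖ ≤ R and all w ∈ ℂ² with ‖w‖ ≤ r*: (i) ‖𝓡_z(w)‖ ≤ (|α|·e^R·(e^{r*}+1)/2)·‖w‖²; (ii) ‖D_w 𝓡_z(w)‖ ≤ (|α|·e^R·(e^{r*}+1))·‖w‖; and (iii) ‖Df(z)‖ ≤ 2 + |α|·e^R. -/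
open Complex

lemma myNormCosLe (z : ℂ) : ‖Complex.cos z‖ ≤ Real.exp |z.im| := by
  rw [Complex.cos]
  calc ‖((Complex.exp (z*I) + Complex.exp (-z*I)) / 2)‖
      ≤ (‖(Complex.exp (z*I))‖ + ‖(Complex.exp (-z*I))‖) / 2 := by
        rw [norm_div, Complex.norm_two]; gcongr; exact norm_add_le _ _
    _ = (Real.exp (-z.im) + Real.exp z.im) / 2 := by
        rw [Complex.norm_exp, Complex.norm_exp]; simp [mul_re]
    _ ≤ (Real.exp |z.im| + Real.exp |z.im|) / 2 := by
        gcongr <;> [exact neg_le_abs _; exact le_abs_self _]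
    _ = Real.exp |z.im| := by ring

lemma myNormSinLe (z : ℂ) : ‖Complex.sin z‖ ≤ Real.exp |z.im| := by
  rw [Complex.sin]
  calc ‖((Complex.exp (-z*I) - Complex.exp (z*I)) * I / 2)‖
      ≤ (‖(Complex.exp (-z*I))‖ + ‖(Complex.exp (z*I))‖) / 2 := by
        rw [norm_div, norm_mul, Complex.norm_I, mul_one, Complex.norm_two]
        gcongr
        exact norm_sub_le _ _
    _ = (Real.exp z.im + Real.exp (-z.im)) / 2 := by
        rw [Complex.norm_exp, Complex.norm_exp]; simp [mul_re]
    _ ≤ (Real.exp |z.im| + Real.exp |z.im|) / 2 := by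
        gcongr <;> [exact le_abs_self _; exact neg_le_abs _]
    _ = Real.exp |z.im| := by ring

lemma myCosSubOne (h : ℂ) (hh : ‖h‖ ≤ 1) :
    ‖(Complex.cos h - 1)‖ ≤ 3/4 * ‖h‖ ^ 2 := by
  have e1 : ‖(h * I)‖ ≤ 1 := by rwa [norm_mul, Complex.norm_I, mul_one]
  have e2 : ‖(-h * I)‖ ≤ 1 := by rwa [norm_mul, norm_neg, Complex.norm_I, mul_one]
  have b1 := Complex.exp_bound e1 (n := 2) (by norm_num)
  have b2 := Complex.exp_bound e2 (n := 2) (by norm_num)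
  simp only [Finset.sum_range_succ, Finset.sum_range_zero] at b1 b2
  norm_num [Nat.factorial] at b1 b2
  have key : Complex.cos h - 1 =
      ((Complex.exp (h*I) - (1 + h*I)) + (Complex.exp (-(h*I)) - (1 + -(h*I)))) / 2 := by
    rw [Complex.cos]; ring_nf
  rw [key]
  calc ‖_‖
      ≤ (‖(Complex.exp (h*I) - (1 + h*I))‖
          + ‖(Complex.exp (-(h*I)) - (1 + -(h*I)))‖) / 2 := by
        rw [norm_div, Complex.norm_two]; gcongr; exact norm_add_le _ _
    _ ≤ (‖h‖ ^ 2 * (3/4) + ‖h‖ ^ 2 * (3/4)) / 2 := by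
        linarith [b1, b2]
    _ = 3/4 * ‖h‖ ^ 2 := by ring

lemma mySinSubSelf (h : ℂ) (hh : ‖h‖ ≤ 1) :
    ‖(Complex.sin h - h)‖ ≤ 2/9 * ‖h‖ ^ 2 := by
  have e1 : ‖(h * I)‖ ≤ 1 := by rwa [norm_mul, Complex.norm_I, mul_one]
  have e2 : ‖(-h * I)‖ ≤ 1 := by rwa [norm_mul, norm_neg, Complex.norm_I, mul_one]
  have b1 := Complex.exp_bound e1 (n := 3) (by norm_num)
  have b2 := Complex.exp_bound e2 (n := 3) (by norm_num)
  simp only [Finset.sum_range_succ, Finset.sum_range_zero] at b1 b2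
  norm_num [Nat.factorial] at b1 b2
  have key : Complex.sin h - h =
      ((Complex.exp (-(h*I)) - (1 + -(h*I) + (h*I)^2/2))
        - (Complex.exp (h*I) - (1 + h*I + (h*I)^2/2))) * I / 2 := by
    rw [Complex.sin]; ring_nf
    linear_combination (-h) * Complex.I_sq
  rw [key]
  calc ‖_‖
      ≤ (‖(Complex.exp (-(h*I)) - (1 + -(h*I) + (h*I)^2/2))‖
          + ‖(Complex.exp (h*I) - (1 + h*I + (h*I)^2/2))‖) / 2 := by
        rw [norm_div, norm_mul, Complex.norm_I, mul_one, Complex.norm_two]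
        gcongr; exact norm_sub_le _ _
    _ ≤ (‖h‖ ^ 3 * (2/9) + ‖h‖ ^ 3 * (2/9)) / 2 := by
        linarith [b1, b2]
    _ = 2/9 * ‖h‖ ^ 3 := by ring
    _ ≤ 2/9 * ‖h‖ ^ 2 := by
        have h0 := norm_nonneg h
        nlinarith [pow_le_pow_of_le_one h0 hh (by norm_num : 2 ≤ 3)]

noncomputable def Lmap (a c : ℂ) : (ℂ × ℂ) →L[ℂ] ℂ × ℂ :=
  ((ContinuousLinearMap.fst ℂ ℂ ℂ + ContinuousLinearMap.snd ℂ ℂ ℂ)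
      + (a * c) • ContinuousLinearMap.fst ℂ ℂ ℂ).prod
    (ContinuousLinearMap.snd ℂ ℂ ℂ + (a * c) • ContinuousLinearMap.fst ℂ ℂ ℂ)

lemma Lmap_apply (a c : ℂ) (w : ℂ × ℂ) :
    Lmap a c w = (w.1 + w.2 + a * c * w.1, w.2 + a * c * w.1) := by
  simp [Lmap]

lemma hasD (a : ℂ) (z : ℂ × ℂ) :
    HasFDerivAt (fun z : ℂ × ℂ => (z.1 + z.2 + a * Complex.sin z.1,
      z.2 + a * Complex.sin z.1)) (Lmap a (Complex.cos z.1)) z := by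
  have h1 : HasFDerivAt (fun z : ℂ × ℂ => Complex.sin z.1)
      ((Complex.cos z.1) • ContinuousLinearMap.fst ℂ ℂ ℂ) z :=
    (Complex.hasDerivAt_sin z.1).comp_hasFDerivAt z hasFDerivAt_fst
  have hsin : HasFDerivAt (fun z : ℂ × ℂ => a * Complex.sin z.1)
      ((a * Complex.cos z.1) • ContinuousLinearMap.fst ℂ ℂ ℂ) z := by
    have := h1.const_mul a
    rwa [smul_smul] at this
  exact ((hasFDerivAt_fst.add hasFDerivAt_snd).add hsin).prodMk (hasFDerivAt_snd.add hsin)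

/-- Explicit constants `C₁, C₂, C₃` for the complex Chirikov standard map:
bounds on the first order Taylor remainder, its derivative, and the Jacobian,
valid near a real base point. -/
theorem stmt_10 (α : ℝ)
    (f : ℂ × ℂ → ℂ × ℂ)
    (hf : ∀ z : ℂ × ℂ,
      f z = (z.1 + z.2 + (α : ℂ) * Complex.sin z.1, z.2 + (α : ℂ) * Complex.sin z.1))
    (z₀ : ℂ × ℂ) (hz₀ : z₀.1.im = 0 ∧ z₀.2.im = 0)
    (R rstar : ℝ) (hrstar : 0 < rstar) (hRr : rstar < R) (hrstar1 : rstar ≤ 1) :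
    ∀ z w : ℂ × ℂ, ‖z - z₀‖ ≤ R → ‖w‖ ≤ rstar →
      ‖f (z + w) - f z - fderiv ℂ f z w‖
          ≤ |α| * Real.exp R * (Real.exp rstar + 1) / 2 * ‖w‖ ^ 2
      ∧ ‖fderiv ℂ (fun w' => f (z + w') - f z - fderiv ℂ f z w') w‖
          ≤ |α| * Real.exp R * (Real.exp rstar + 1) * ‖w‖
      ∧ ‖fderiv ℂ f z‖ ≤ 2 + |α| * Real.exp R := by
  have hfe : f = fun z : ℂ × ℂ =>
      (z.1 + z.2 + (α : ℂ) * Complex.sin z.1, z.2 + (α : ℂ) * Complex.sin z.1) := funext hf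
  subst hfe
  intro z w hz hw
  have hDf : fderiv ℂ (fun z : ℂ × ℂ =>
      (z.1 + z.2 + (α : ℂ) * Complex.sin z.1, z.2 + (α : ℂ) * Complex.sin z.1)) z
      = Lmap (α : ℂ) (Complex.cos z.1) := (hasD (α : ℂ) z).fderiv
  -- basic facts
  have hexpR : (1:ℝ) ≤ Real.exp R := Real.one_le_exp (le_trans hrstar.le hRr.le)
  have hexpr : (1:ℝ) ≤ Real.exp rstar := Real.one_le_exp hrstar.le
  have hαn : (0:ℝ) ≤ |α| := abs_nonneg α
  have hwn : (0:ℝ) ≤ ‖w‖ := norm_nonneg w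
  have him : |z.1.im| ≤ R := by
    have h1 : |(z - z₀).1.im| ≤ ‖(z - z₀).1‖ := Complex.abs_im_le_norm _
    have h2 : ‖(z - z₀).1‖ ≤ ‖z - z₀‖ := norm_fst_le (z - z₀)
    have h3 : (z - z₀).1.im = z.1.im := by
      simp [Prod.fst_sub, Complex.sub_im, hz₀.1]
    rw [h3] at h1
    linarith
  have hsa : ‖Complex.sin z.1‖ ≤ Real.exp R :=
    le_trans (myNormSinLe z.1) (Real.exp_le_exp.2 him)
  have hca : ‖Complex.cos z.1‖ ≤ Real.exp R :=
    le_trans (myNormCosLe z.1) (Real.exp_le_exp.2 him)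
  have hh1 : ‖w.1‖ ≤ ‖w‖ := norm_fst_le w
  have hhle1 : ‖w.1‖ ≤ 1 := le_trans hh1 (le_trans hw hrstar1)
  have hc1 : ‖(Complex.cos w.1 - 1)‖ ≤ 3/4 * ‖w‖ ^ 2 := by
    refine le_trans (myCosSubOne w.1 hhle1) ?_
    have := norm_nonneg w.1
    nlinarith
  have hs1 : ‖(Complex.sin w.1 - w.1)‖ ≤ 2/9 * ‖w‖ ^ 2 := by
    refine le_trans (mySinSubSelf w.1 hhle1) ?_
    have := norm_nonneg w.1
    nlinarith
  refine ⟨?_, ?_, ?_⟩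
  · -- part (i)
    rw [hDf]
    have key : (fun z : ℂ × ℂ =>
        (z.1 + z.2 + (α : ℂ) * Complex.sin z.1, z.2 + (α : ℂ) * Complex.sin z.1)) (z + w)
        - (fun z : ℂ × ℂ =>
        (z.1 + z.2 + (α : ℂ) * Complex.sin z.1, z.2 + (α : ℂ) * Complex.sin z.1)) z
        - Lmap (α : ℂ) (Complex.cos z.1) w
        = ((α : ℂ) * (Complex.sin z.1 * (Complex.cos w.1 - 1)
              + Complex.cos z.1 * (Complex.sin w.1 - w.1)),
           (α : ℂ) * (Complex.sin z.1 * (Complex.cos w.1 - 1)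
              + Complex.cos z.1 * (Complex.sin w.1 - w.1))) := by
      rw [Lmap_apply, Prod.ext_iff]
      constructor <;>
        simp only [Prod.fst_add, Prod.snd_add, Prod.fst_sub, Prod.snd_sub,
          Complex.sin_add] <;> ring
    rw [key]
    have hnm : ‖((α : ℂ) * (Complex.sin z.1 * (Complex.cos w.1 - 1)
              + Complex.cos z.1 * (Complex.sin w.1 - w.1)),
           (α : ℂ) * (Complex.sin z.1 * (Complex.cos w.1 - 1)
              + Complex.cos z.1 * (Complex.sin w.1 - w.1)))‖
        = ‖(α : ℂ) * (Complex.sin z.1 * (Complex.cos w.1 - 1)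
              + Complex.cos z.1 * (Complex.sin w.1 - w.1))‖ := by
      rw [Prod.norm_def]; simp
    rw [hnm]
    calc ‖(α : ℂ) * (Complex.sin z.1 * (Complex.cos w.1 - 1)
              + Complex.cos z.1 * (Complex.sin w.1 - w.1))‖
        ≤ |α| * (Real.exp R * (3/4 * ‖w‖^2) + Real.exp R * (2/9 * ‖w‖^2)) := by
          rw [norm_mul, Complex.norm_real, Real.norm_eq_abs]
          gcongr
          refine le_trans (norm_add_le _ _) ?_
          gcongr <;> rw [norm_mul]
          · exact mul_le_mul hsa hc1 (norm_nonneg _) (Real.exp_nonneg R)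
          · exact mul_le_mul hca hs1 (norm_nonneg _) (Real.exp_nonneg R)
      _ ≤ |α| * Real.exp R * (Real.exp rstar + 1) / 2 * ‖w‖ ^ 2 := by
          have h2 : (0:ℝ) ≤ ‖w‖^2 := sq_nonneg _
          have hE : (0:ℝ) < Real.exp R := Real.exp_pos R
          nlinarith [mul_nonneg hαn h2, mul_nonneg (mul_nonneg hαn hE.le) h2]
  · -- part (ii)
    have hg : HasFDerivAt (fun w' : ℂ × ℂ =>
        (fun z : ℂ × ℂ =>
          (z.1 + z.2 + (α : ℂ) * Complex.sin z.1, z.2 + (α : ℂ) * Complex.sin z.1)) (z + w')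
        - (fun z : ℂ × ℂ =>
          (z.1 + z.2 + (α : ℂ) * Complex.sin z.1, z.2 + (α : ℂ) * Complex.sin z.1)) z
        - (fderiv ℂ (fun z : ℂ × ℂ =>
          (z.1 + z.2 + (α : ℂ) * Complex.sin z.1, z.2 + (α : ℂ) * Complex.sin z.1)) z) w')
        (Lmap (α : ℂ) (Complex.cos (z + w).1) - Lmap (α : ℂ) (Complex.cos z.1)) w := by
      have h1 : HasFDerivAt (fun w' : ℂ × ℂ =>
          (fun z : ℂ × ℂ =>
            (z.1 + z.2 + (α : ℂ) * Complex.sin z.1, z.2 + (α : ℂ) * Complex.sin z.1)) (z + w'))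
          (Lmap (α : ℂ) (Complex.cos (z + w).1)) w := by
        have h2 := (hasD (α : ℂ) (z + w)).comp w ((hasFDerivAt_id w).const_add z)
        exact h2
      rw [hDf]
      exact (h1.sub_const _).sub ((Lmap (α : ℂ) (Complex.cos z.1)).hasFDerivAt)
    rw [hg.fderiv]
    have hcdiff : ‖Complex.cos (z + w).1 - Complex.cos z.1‖ ≤ Real.exp R * (2 * ‖w‖) := by
      have hid : Complex.cos (z + w).1 - Complex.cos z.1
          = Complex.cos z.1 * (Complex.cos w.1 - 1) - Complex.sin z.1 * Complex.sin w.1 := by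
        simp only [Prod.fst_add, Complex.cos_add]; ring
      rw [hid]
      have hsinw : ‖Complex.sin w.1‖ ≤ 2/9 * ‖w‖^2 + ‖w‖ := by
        calc ‖Complex.sin w.1‖ ≤ ‖Complex.sin w.1 - w.1‖ + ‖w.1‖ := by
              simpa using norm_add_le (Complex.sin w.1 - w.1) w.1
          _ ≤ 2/9 * ‖w‖^2 + ‖w‖ := add_le_add hs1 hh1
      calc ‖Complex.cos z.1 * (Complex.cos w.1 - 1) - Complex.sin z.1 * Complex.sin w.1‖
          ≤ ‖Complex.cos z.1‖ * ‖Complex.cos w.1 - 1‖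
              + ‖Complex.sin z.1‖ * ‖Complex.sin w.1‖ := by
            refine le_trans (norm_sub_le _ _) ?_
            rw [norm_mul, norm_mul]
        _ ≤ Real.exp R * (3/4 * ‖w‖^2) + Real.exp R * (2/9 * ‖w‖^2 + ‖w‖) := by
            gcongr <;> first
              | exact hca | exact hc1 | exact hsa | exact hsinw
        _ ≤ Real.exp R * (2 * ‖w‖) := by
            have hw2 : ‖w‖^2 ≤ ‖w‖ := by nlinarith [le_trans hw hrstar1]
            have hE : (0:ℝ) < Real.exp R := Real.exp_pos R
            nlinarith
    have hop : ‖Lmap (α : ℂ) (Complex.cos (z + w).1) - Lmap (α : ℂ) (Complex.cos z.1)‖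
        ≤ |α| * ‖Complex.cos (z + w).1 - Complex.cos z.1‖ := by
      refine ContinuousLinearMap.opNorm_le_bound _ (by positivity) fun w' => ?_
      rw [ContinuousLinearMap.sub_apply, Lmap_apply, Lmap_apply]
      have hval : ((w'.1 + w'.2 + (α:ℂ) * Complex.cos (z + w).1 * w'.1,
            w'.2 + (α:ℂ) * Complex.cos (z + w).1 * w'.1)
          - (w'.1 + w'.2 + (α:ℂ) * Complex.cos z.1 * w'.1,
            w'.2 + (α:ℂ) * Complex.cos z.1 * w'.1) : ℂ × ℂ)
          = ((α:ℂ) * (Complex.cos (z + w).1 - Complex.cos z.1) * w'.1,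
             (α:ℂ) * (Complex.cos (z + w).1 - Complex.cos z.1) * w'.1) := by
        rw [Prod.ext_iff]
        constructor <;> simp only [Prod.fst_sub, Prod.snd_sub] <;> ring
      rw [hval]
      have : ‖((α:ℂ) * (Complex.cos (z + w).1 - Complex.cos z.1) * w'.1,
             (α:ℂ) * (Complex.cos (z + w).1 - Complex.cos z.1) * w'.1)‖
          = ‖(α:ℂ) * (Complex.cos (z + w).1 - Complex.cos z.1) * w'.1‖ := by
        rw [Prod.norm_def]; simp
      rw [this, norm_mul, norm_mul, Complex.norm_real, Real.norm_eq_abs]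
      have h0 : (0:ℝ) ≤ |α| * ‖Complex.cos (z + w).1 - Complex.cos z.1‖ :=
        mul_nonneg (abs_nonneg _) (norm_nonneg _)
      rw [mul_assoc, mul_assoc]
      exact mul_le_mul_of_nonneg_left
        (mul_le_mul_of_nonneg_left (norm_fst_le w') (norm_nonneg _)) (abs_nonneg _)
    have step1 : ‖Lmap (α : ℂ) (Complex.cos (z + w).1) - Lmap (α : ℂ) (Complex.cos z.1)‖
        ≤ |α| * (Real.exp R * (2 * ‖w‖)) :=
      le_trans hop (mul_le_mul_of_nonneg_left hcdiff hαn)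
    refine le_trans step1 ?_
    have h2 : (2:ℝ) ≤ Real.exp rstar + 1 := by linarith
    calc |α| * (Real.exp R * (2 * ‖w‖)) = (|α| * Real.exp R * ‖w‖) * 2 := by ring
      _ ≤ (|α| * Real.exp R * ‖w‖) * (Real.exp rstar + 1) :=
          mul_le_mul_of_nonneg_left h2 (by positivity)
      _ = |α| * Real.exp R * (Real.exp rstar + 1) * ‖w‖ := by ring
  · -- part (iii)
    rw [hDf]
    refine ContinuousLinearMap.opNorm_le_bound _ (by positivity) fun v => ?_
    rw [Lmap_apply, Prod.norm_def]
    have hv1 : ‖v.1‖ ≤ ‖v‖ := norm_fst_le v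
    have hv2 : ‖v.2‖ ≤ ‖v‖ := norm_snd_le v
    have hcb : ‖(α:ℂ) * Complex.cos z.1 * v.1‖ ≤ |α| * Real.exp R * ‖v‖ := by
      rw [norm_mul, norm_mul, Complex.norm_real, Real.norm_eq_abs]
      exact mul_le_mul (mul_le_mul le_rfl hca (norm_nonneg _) (abs_nonneg _)) hv1
        (norm_nonneg _) (by positivity)
    refine max_le ?_ ?_
    · calc ‖v.1 + v.2 + (α:ℂ) * Complex.cos z.1 * v.1‖
          ≤ ‖v.1‖ + ‖v.2‖ + ‖(α:ℂ) * Complex.cos z.1 * v.1‖ :=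
            le_trans (norm_add_le _ _) (add_le_add_left (norm_add_le _ _) _)
        _ ≤ ‖v‖ + ‖v‖ + |α| * Real.exp R * ‖v‖ :=
            add_le_add (add_le_add hv1 hv2) hcb
        _ = (2 + |α| * Real.exp R) * ‖v‖ := by ring
    · calc ‖v.2 + (α:ℂ) * Complex.cos z.1 * v.1‖
          ≤ ‖v.2‖ + ‖(α:ℂ) * Complex.cos z.1 * v.1‖ := norm_add_le _ _
        _ ≤ ‖v‖ + |α| * Real.exp R * ‖v‖ := add_le_add hv2 hcb
        _ ≤ (2 + |α| * Real.exp R) * ‖v‖ := by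
            have h := norm_nonneg v
            linarith [mul_nonneg (mul_nonneg (abs_nonneg α) (Real.exp_nonneg R)) h]
end

section
/- Let N ≥ 0, let H : D → ℂ be analytic and bounded on the open unit disk D with H(0) = H′(0) = … = H^{(N)}(0) = 0, and let Q : D → ℂ be analytic and bounded. Then sup_{σ∈D} | ∫₀^σ H(z)·Q(z) dz | ≤ (‖Q‖₀ / (N+2)) · ‖H‖₀, where the integral is taken along the straight segment from 0 to σ and ‖·‖₀ denotes the supremum norm over D. -/
open Metric Set Function Filter

/-- Schwarz-type bound: an analytic function on the unit disk bounded by `M` and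
vanishing to order `N` at `0` satisfies `‖H z‖ ≤ M * ‖z‖^(N+1)`. -/
lemma tail_pointwise_bound (N : ℕ) (H : ℂ → ℂ) (MH : ℝ)
    (hH : AnalyticOnNhd ℂ H (Metric.ball 0 1))
    (hMH : ∀ σ ∈ Metric.ball (0 : ℂ) 1, ‖H σ‖ ≤ MH)
    (hvanish : ∀ k ≤ N, iteratedDeriv k H 0 = 0) :
    ∀ z ∈ Metric.ball (0 : ℂ) 1, ‖H z‖ ≤ MH * ‖z‖ ^ (N + 1) := by
  have h0 : (0 : ℂ) ∈ ball (0 : ℂ) 1 := by simp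
  obtain ⟨p, hp⟩ := hH 0 h0
  -- coefficients vanish up to N
  have hcoeff : ∀ k ≤ N, p.coeff k = 0 := by
    intro k hk
    obtain ⟨r, hr⟩ := hp
    have h1 : Nat.factorial k • p k (fun _ ↦ (1 : ℂ)) = iteratedFDeriv ℂ k H 0 (fun _ ↦ (1 : ℂ)) :=
      hr.factorial_smul (1 : ℂ) k
    have h2 : iteratedFDeriv ℂ k H 0 (fun _ ↦ (1 : ℂ)) = 0 := by
      rw [← iteratedDeriv_eq_iteratedFDeriv]; exact hvanish k hk
    have h3 : (Nat.factorial k : ℂ) * p.coeff k = 0 := by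
      rw [FormalMultilinearSeries.coeff]
      have : p k (fun _ ↦ (1 : ℂ)) = p k 1 := rfl
      rw [← this]
      rw [h2, nsmul_eq_mul] at h1
      exact h1
    have hk0 : (Nat.factorial k : ℂ) ≠ 0 := Nat.cast_ne_zero.mpr k.factorial_ne_zero
    exact (mul_eq_zero.mp h3).resolve_left hk0
  set g : ℂ → ℂ := (swap dslope 0)^[N + 1] H with hg
  -- values of iterates at 0
  have hval : ∀ k, ((swap dslope 0)^[k] H) 0 = p.coeff k := by
    intro k
    have := (hp.has_fpower_series_iterate_dslope_fslope k).coeff_zero (fun _ ↦ (1 : ℂ))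
    have h1 : (FormalMultilinearSeries.fslope^[k] p).coeff 0 = p.coeff k := by
      rw [FormalMultilinearSeries.coeff_iterate_fslope]; ring_nf
    rw [← h1, FormalMultilinearSeries.coeff]
    exact this.symm
  -- factorization away from 0
  have hfac : ∀ k ≤ N + 1, ∀ z : ℂ, z ≠ 0 → ((swap dslope 0)^[k] H) z = H z / z ^ k := by
    intro k
    induction k with
    | zero => intro _ z _; simp
    | succ k ih =>
      intro hk z hz
      rw [Function.iterate_succ_apply']
      have hgk : ((swap dslope 0)^[k] H) 0 = 0 := by
        rw [hval k]; exact hcoeff k (by omega)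
      have : swap dslope 0 ((swap dslope 0)^[k] H) z = dslope ((swap dslope 0)^[k] H) 0 z := rfl
      rw [this, dslope_of_ne _ hz, slope_def_field, hgk, sub_zero, sub_zero,
        ih (by omega) z hz, div_div, ← pow_succ]
  -- differentiability of g on the ball
  have hdiff : ∀ k, DifferentiableOn ℂ ((swap dslope 0)^[k] H) (ball (0 : ℂ) 1) := by
    intro k
    induction k with
    | zero => exact hH.differentiableOn
    | succ k ih =>
      rw [Function.iterate_succ_apply']
      exact (Complex.differentiableOn_dslope (Metric.ball_mem_nhds (0 : ℂ) one_pos)).mpr ih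
  -- max-modulus bound on g
  have hMH0 : 0 ≤ MH := (norm_nonneg _).trans (hMH 0 h0)
  have hgbound : ∀ z ∈ ball (0 : ℂ) 1, ‖g z‖ ≤ MH := by
    intro z hz
    rw [mem_ball_zero_iff] at hz
    suffices h : ∀ᶠ r in nhdsWithin (1 : ℝ) (Set.Iio 1), ‖g z‖ ≤ MH / r ^ (N + 1) by
      have hlim : Filter.Tendsto (fun r : ℝ => MH / r ^ (N + 1))
          (nhdsWithin (1 : ℝ) (Set.Iio 1)) (nhds MH) := by
        have : Filter.Tendsto (fun r : ℝ => MH / r ^ (N + 1)) (nhds 1) (nhds MH) := by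
          have := (tendsto_const_nhds (x := MH) (f := nhds (1:ℝ))).div
            ((continuous_pow (N+1)).tendsto 1) (by norm_num)
          simp only [one_pow, div_one] at this; exact this
        exact this.mono_left nhdsWithin_le_nhds
      exact ge_of_tendsto hlim h
    filter_upwards [Ioo_mem_nhdsLT_of_mem ⟨hz, le_rfl⟩] with r hr
    have hr0 : 0 < r := (norm_nonneg z).trans_lt hr.1
    have hdc : DiffContOnCl ℂ g (ball 0 r) := by
      refine DifferentiableOn.diffContOnCl ?_
      rw [closure_ball (0 : ℂ) hr0.ne']
      exact (hdiff (N + 1)).mono (closedBall_subset_ball hr.2)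
    refine Complex.norm_le_of_forall_mem_frontier_norm_le isBounded_ball hdc ?_ ?_
    · rw [frontier_ball (0 : ℂ) hr0.ne']
      intro w hw
      have hwn : ‖w‖ = r := by simpa using mem_sphere_iff_norm.mp hw
      have hw0 : w ≠ 0 := by
        intro h
        rw [h, norm_zero] at hwn
        exact hr0.ne hwn
      have hwball : w ∈ ball (0 : ℂ) 1 := by
        rw [mem_ball_zero_iff, hwn]; exact hr.2
      rw [hg, hfac (N + 1) le_rfl w hw0, norm_div, norm_pow, hwn]
      gcongr
      exact hMH w hwball
    · rw [closure_ball (0 : ℂ) hr0.ne', mem_closedBall, dist_zero_right]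
      exact hr.1.le
  -- conclude
  intro z hz
  rcases eq_or_ne z 0 with rfl | hz0
  · have hH0 : H 0 = 0 := by simpa [iteratedDeriv_zero] using hvanish 0 (Nat.zero_le N)
    simp [hH0]
  · have hzp : z ^ (N + 1) ≠ 0 := pow_ne_zero _ hz0
    have hfz : g z = H z / z ^ (N + 1) := hfac (N + 1) le_rfl z hz0
    have hHz : H z = z ^ (N + 1) * g z := by
      rw [(div_eq_iff hzp).mp hfz.symm, mul_comm]
    rw [hHz, norm_mul, norm_pow, mul_comm]
    exact mul_le_mul_of_nonneg_right (hgbound z hz) (by positivity)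

/-- Operator-norm estimate for the integral of a product against an analytic `N`-tail:
if `H` is analytic and bounded on the unit disk and vanishes to order `N` at `0`,
then the segment integral `∫₀^σ H(z)Q(z) dz` is bounded by `(‖Q‖₀/(N+2))·‖H‖₀`. -/
theorem stmt_13 (N : ℕ) (H Q : ℂ → ℂ)
    (hH : AnalyticOnNhd ℂ H (Metric.ball 0 1))
    (hQ : AnalyticOnNhd ℂ Q (Metric.ball 0 1))
    (MH MQ : ℝ)
    (hMH : ∀ σ ∈ Metric.ball (0 : ℂ) 1, ‖H σ‖ ≤ MH)
    (hMQ : ∀ σ ∈ Metric.ball (0 : ℂ) 1, ‖Q σ‖ ≤ MQ)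
    (hvanish : ∀ k ≤ N, iteratedDeriv k H 0 = 0) :
    ∀ σ ∈ Metric.ball (0 : ℂ) 1,
      ‖∫ t in (0 : ℝ)..1, H ((t : ℂ) * σ) * Q ((t : ℂ) * σ) * σ‖
        ≤ MQ / (N + 2) * MH := by
  intro σ hσ
  have h0 : (0 : ℂ) ∈ ball (0 : ℂ) 1 := by simp
  have hMH0 : 0 ≤ MH := (norm_nonneg _).trans (hMH 0 h0)
  have hMQ0 : 0 ≤ MQ := (norm_nonneg _).trans (hMQ 0 h0)
  have hσn : ‖σ‖ < 1 := mem_ball_zero_iff.mp hσ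
  have key := tail_pointwise_bound N H MH hH hMH hvanish
  have hbound : ∀ᵐ (t : ℝ) ∂(MeasureTheory.volume.restrict (Set.uIoc (0:ℝ) 1)),
      ‖H ((t : ℂ) * σ) * Q ((t : ℂ) * σ) * σ‖ ≤ MH * MQ * t ^ (N + 1) := by
    refine MeasureTheory.ae_restrict_of_forall_mem measurableSet_uIoc ?_
    intro t ht
    rw [Set.uIoc_of_le (by norm_num : (0:ℝ) ≤ 1)] at ht
    obtain ⟨ht0, ht1⟩ := ht
    have htσ : ‖(t : ℂ) * σ‖ ≤ t := by
      rw [norm_mul, Complex.norm_real, Real.norm_eq_abs, abs_of_pos ht0]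
      calc t * ‖σ‖ ≤ t * 1 := by
            exact mul_le_mul_of_nonneg_left hσn.le ht0.le
        _ = t := mul_one t
    have htball : (t : ℂ) * σ ∈ ball (0 : ℂ) 1 := by
      rw [mem_ball_zero_iff]
      have h1 : ‖(t : ℂ) * σ‖ ≤ ‖σ‖ := by
        rw [norm_mul, Complex.norm_real, Real.norm_eq_abs, abs_of_pos ht0]
        nlinarith [norm_nonneg σ]
      exact h1.trans_lt hσn
    have hHb : ‖H ((t : ℂ) * σ)‖ ≤ MH * t ^ (N + 1) := by
      refine (key _ htball).trans ?_
      exact mul_le_mul_of_nonneg_left (pow_le_pow_left₀ (norm_nonneg _) htσ _) hMH0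
    calc ‖H ((t : ℂ) * σ) * Q ((t : ℂ) * σ) * σ‖
        = ‖H ((t : ℂ) * σ)‖ * ‖Q ((t : ℂ) * σ)‖ * ‖σ‖ := by rw [norm_mul, norm_mul]
      _ ≤ (MH * t ^ (N + 1)) * MQ * 1 :=
          mul_le_mul (mul_le_mul hHb (hMQ _ htball) (norm_nonneg _) (by positivity))
            hσn.le (norm_nonneg _) (by positivity)
      _ = MH * MQ * t ^ (N + 1) := by ring
  have hint : IntervalIntegrable (fun t : ℝ => MH * MQ * t ^ (N + 1))
      MeasureTheory.volume 0 1 :=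
    (Continuous.intervalIntegrable (by continuity) 0 1)
  have := intervalIntegral.norm_integral_le_abs_of_norm_le hbound hint
  refine this.trans ?_
  have hval : (∫ t in (0:ℝ)..1, MH * MQ * t ^ (N + 1)) = MH * MQ * (1 / (N + 2)) := by
    rw [intervalIntegral.integral_const_mul, integral_pow]
    push_cast
    ring
  rw [hval, abs_of_nonneg (by positivity)]
  rw [div_eq_mul_one_div MQ ((N:ℝ) + 2)]
  ring_nf
  rfl
end

section
/- Let M ≥ 1, let F : ℝ² → ℝ² and P_u, P_s : ℝ → ℝ² be continuously differentiable, and define 𝓕 : ℝ^{2M+2} → ℝ^{2M+2} by 𝓕(x, v₀, …, v_{M−1}, y) = (P_u(x) − v₀, F(v₀) − v₁, …, F(v_{M−2}) − v_{M−1}, F(v_{M−1}) − P_s(y)). Suppose p* = (x*, v₀*, …, v_{M−1}*, y*) satisfies 𝓕(p*) = 0 and the Jacobian matrix D𝓕(p*) is invertible. Then the two vectors DF(v_{M−1}*)·DF(v_{M−2}*)···DF(v₀*)·P_u′(x*) (which equals d/dx [F^{M}(P_u(x))] at x = x*) and P_s′(y*) are linearly independent in ℝ². -/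
/-- Transversality from the parallel-shooting map: if the shooting map `𝓕` encoding a
homoclinic orbit segment has a zero at which its Jacobian is invertible, then the tangent
vector to `F^M ∘ P_u` and the tangent vector to `P_s` at the intersection are linearly
independent. -/
theorem stmt_18 (M : ℕ) (hM : 1 ≤ M)
    (F : ℝ × ℝ → ℝ × ℝ) (Pu Ps : ℝ → ℝ × ℝ)
    (hF : ContDiff ℝ 1 F) (hPu : ContDiff ℝ 1 Pu) (hPs : ContDiff ℝ 1 Ps)
    (𝓕 : ℝ × (Fin M → ℝ × ℝ) × ℝ → Fin (M + 1) → ℝ × ℝ)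
    (h𝓕 : ∀ (x : ℝ) (v : Fin M → ℝ × ℝ) (y : ℝ),
      𝓕 (x, v, y) = Fin.cons (Pu x - v ⟨0, hM⟩)
        (fun i : Fin M =>
          if h : (i : ℕ) + 1 < M then F (v i) - v ⟨(i : ℕ) + 1, h⟩
          else F (v i) - Ps y))
    (p : ℝ × (Fin M → ℝ × ℝ) × ℝ)
    (hzero : 𝓕 p = 0)
    (hinv : Function.Bijective (fderiv ℝ 𝓕 p))
    (w : ℕ → ℝ × ℝ)
    (hw0 : w 0 = deriv Pu p.1)
    (hwk : ∀ i : Fin M, w ((i : ℕ) + 1) = fderiv ℝ F (p.2.1 i) (w i)) :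
    LinearIndependent ℝ ![w M, deriv Ps p.2.2] := by
  obtain ⟨x, v, y⟩ := p
  dsimp only at hw0 hwk ⊢
  set P0 : ℝ × (Fin M → ℝ × ℝ) × ℝ := (x, v, y) with hP0
  rw [LinearIndependent.pair_iff]
  intro s t hst
  -- continuous linear projections
  set π1 : (ℝ × (Fin M → ℝ × ℝ) × ℝ) →L[ℝ] ℝ := ContinuousLinearMap.fst ℝ ℝ _ with hπ1
  set πs : (ℝ × (Fin M → ℝ × ℝ) × ℝ) →L[ℝ] ((Fin M → ℝ × ℝ) × ℝ) :=
    ContinuousLinearMap.snd ℝ ℝ _ with hπs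
  set πv : Fin M → ((ℝ × (Fin M → ℝ × ℝ) × ℝ) →L[ℝ] (ℝ × ℝ)) := fun i =>
    (ContinuousLinearMap.proj i).comp ((ContinuousLinearMap.fst ℝ _ ℝ).comp πs) with hπv
  set π3 : (ℝ × (Fin M → ℝ × ℝ) × ℝ) →L[ℝ] ℝ :=
    (ContinuousLinearMap.snd ℝ _ ℝ).comp πs with hπ3
  -- the component functions
  set g : Fin (M + 1) → (ℝ × (Fin M → ℝ × ℝ) × ℝ) → ℝ × ℝ := fun j p =>
    (Fin.cons (Pu p.1 - p.2.1 ⟨0, hM⟩)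
      (fun i : Fin M =>
        if h : (i : ℕ) + 1 < M then F (p.2.1 i) - p.2.1 ⟨(i : ℕ) + 1, h⟩
        else F (p.2.1 i) - Ps p.2.2) : Fin (M + 1) → ℝ × ℝ) j with hg
  have h𝓕' : 𝓕 = fun p j => g j p := by
    funext p
    obtain ⟨x', v', y'⟩ := p
    exact h𝓕 x' v' y'
  -- the component derivatives
  set D : Fin (M + 1) → ((ℝ × (Fin M → ℝ × ℝ) × ℝ) →L[ℝ] (ℝ × ℝ)) :=
    (Fin.cons ((fderiv ℝ Pu x).comp π1 - πv ⟨0, hM⟩)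
      (fun i : Fin M =>
        if h : (i : ℕ) + 1 < M then (fderiv ℝ F (v i)).comp (πv i) - πv ⟨(i : ℕ) + 1, h⟩
        else (fderiv ℝ F (v i)).comp (πv i) - (fderiv ℝ Ps y).comp π3) :
      Fin (M + 1) → _) with hD
  -- the candidate kernel vector
  set q : ℝ × (Fin M → ℝ × ℝ) × ℝ := (s, fun i => s • w i, -t) with hq
  have hVi : ∀ i : Fin M, HasFDerivAt (fun p : ℝ × (Fin M → ℝ × ℝ) × ℝ => p.2.1 i) (πv i) P0 :=
    fun i => (πv i).hasFDerivAt
  have hkey : ∀ j, HasFDerivAt (g j) (D j) P0 ∧ D j q = 0 := by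
    intro j
    refine Fin.cases ?_ ?_ j
    · constructor
      · have : HasFDerivAt (fun p : ℝ × (Fin M → ℝ × ℝ) × ℝ => Pu p.1 - p.2.1 ⟨0, hM⟩)
            ((fderiv ℝ Pu x).comp π1 - πv ⟨0, hM⟩) P0 :=
          (((hPu.differentiable one_ne_zero) x).hasFDerivAt.comp P0 π1.hasFDerivAt).sub
            (hVi ⟨0, hM⟩)
        simpa [hg, hD] using this
      · have hPux : fderiv ℝ Pu x s = s • deriv Pu x := by
          rw [← fderiv_apply_one_eq_deriv, ← map_smul, smul_eq_mul, mul_one]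
        simp [hD, hq, hπv, hπs, hπ1, hPux, hw0, smul_sub]
    · intro i
      by_cases h : (i : ℕ) + 1 < M
      · constructor
        · have : HasFDerivAt
              (fun p : ℝ × (Fin M → ℝ × ℝ) × ℝ => F (p.2.1 i) - p.2.1 ⟨(i : ℕ) + 1, h⟩)
              ((fderiv ℝ F (v i)).comp (πv i) - πv ⟨(i : ℕ) + 1, h⟩) P0 :=
            (((hF.differentiable one_ne_zero) (v i)).hasFDerivAt.comp P0 (hVi i)).sub
              (hVi ⟨(i : ℕ) + 1, h⟩)
          simpa [hg, hD, h] using this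
        · have hF1 : fderiv ℝ F (v i) (s • w i) = s • w ((i : ℕ) + 1) := by
            rw [map_smul, ← hwk i]
          simp [hD, hq, hπv, hπs, h, hF1]
      · constructor
        · have : HasFDerivAt
              (fun p : ℝ × (Fin M → ℝ × ℝ) × ℝ => F (p.2.1 i) - Ps p.2.2)
              ((fderiv ℝ F (v i)).comp (πv i) - (fderiv ℝ Ps y).comp π3) P0 :=
            (((hF.differentiable one_ne_zero) (v i)).hasFDerivAt.comp P0 (hVi i)).sub
              (((hPs.differentiable one_ne_zero) y).hasFDerivAt.comp P0 π3.hasFDerivAt)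
          simpa [hg, hD, h] using this
        · have hiM : (i : ℕ) + 1 = M := le_antisymm i.isLt (not_lt.mp h)
          have hF1 : fderiv ℝ F (v i) (s • w i) = s • w M := by
            rw [map_smul, ← hwk i, hiM]
          have hPsy : fderiv ℝ Ps y (-t) = (-t) • deriv Ps y := by
            rw [← fderiv_apply_one_eq_deriv, ← map_smul, smul_eq_mul, mul_one]
          simpa [hD, hq, hπv, hπs, hπ3, h, hF1, hPsy] using hst
  have hdiff : ∀ j, DifferentiableAt ℝ (g j) P0 := fun j => (hkey j).1.differentiableAt
  have hDq : fderiv ℝ 𝓕 P0 q = 0 := by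
    rw [h𝓕', fderiv_pi hdiff]
    funext j
    simp only [ContinuousLinearMap.pi_apply, Pi.zero_apply]
    rw [(hkey j).1.fderiv]
    exact (hkey j).2
  have hq0 : q = 0 := by
    apply hinv.injective
    rw [map_zero, hDq]
  rw [hq, Prod.ext_iff, Prod.ext_iff] at hq0
  refine ⟨hq0.1, ?_⟩
  have := hq0.2.2
  simpa [neg_eq_zero] using this
end
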